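/- The operators H = -2ih, E = (i/2)(e⁺h + h e⁺) + iλe⁺, F = -(i/2)(e⁻h + h e⁻) + iλe⁻, where h, e⁺, e⁻ satisfy [h, e^±] = ±i e^± and e⁺e⁻ = e⁻e⁺ = 1, satisfy the sl(2,ℝ) commutation relations [E,F] = H, [H,E] = 2E, [H,F] = -2F. -/
import Mathlib


/-- In an associative ℂ-algebra with h, e⁺, e⁻ satisfying
[h,e⁺] = i e⁺, [h,e⁻] = -i e⁻, e⁺e⁻ = e⁻e⁺ = 1, the operators
H = -2ih, E = (i/2)(e⁺h + h e⁺) + iλe⁺, F = -(i/2)(e⁻h + h e⁻) + iλe⁻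
satisfy [E,F] = H, [H,E] = 2E, [H,F] = -2F. -/
theorem stmt0 {A : Type*} [Ring A] [Algebra ℂ A] (h ep em : A) (lam : ℝ)
    (hcp : h * ep - ep * h = Complex.I • ep)
    (hcm : h * em - em * h = -(Complex.I • em))
    (hinv1 : ep * em = 1) (hinv2 : em * ep = 1)
    (E F H : A)
    (hE : E = (Complex.I / 2) • (ep * h + h * ep) + (Complex.I * (lam : ℂ)) • ep)
    (hF : F = -((Complex.I / 2) • (em * h + h * em)) + (Complex.I * (lam : ℂ)) • em)
    (hH : H = -((2 * Complex.I) • h)) :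
    E * F - F * E = H ∧ H * E - E * H = (2 : ℂ) • E ∧ H * F - F * H = -((2 : ℂ) • F) := by
  have k1 : h * ep = ep * h + Complex.I • ep := by
    have := hcp; linear_combination (norm := abel) this
  have k2 : h * em = em * h - Complex.I • em := by
    have := hcm; linear_combination (norm := abel) this
  have Rp : ∀ x : A, h * (ep * x) = ep * (h * x) + Complex.I • (ep * x) := by
    intro x
    rw [← mul_assoc, k1, add_mul, smul_mul_assoc, mul_assoc]
  have Rm : ∀ x : A, h * (em * x) = em * (h * x) - Complex.I • (em * x) := by
    intro x
    rw [← mul_assoc, k2, sub_mul, smul_mul_assoc, mul_assoc]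
  have Cp : ∀ x : A, ep * (em * x) = x := by
    intro x; rw [← mul_assoc, hinv1, one_mul]
  have Cm : ∀ x : A, em * (ep * x) = x := by
    intro x; rw [← mul_assoc, hinv2, one_mul]
  subst hE hF hH
  refine ⟨?_, ?_, ?_⟩ <;>
  · simp only [mul_add, add_mul, mul_sub, sub_mul, mul_neg, neg_mul, smul_mul_assoc,
      mul_smul_comm, smul_add, smul_sub, smul_neg, smul_smul, mul_assoc,
      k1, k2, Rp, Rm, Cp, Cm, hinv1, hinv2, mul_one, one_mul]
    match_scalars <;> (simp [Complex.ext_iff]; try constructor) <;> try ring
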